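/- Let F be the cumulative distribution function of a continuous strictly positive probability density f on [0,1], and let G be the cumulative distribution function of a probability measure on [0,1]. Suppose ∫₀^x (F(t) − G(t)) dt ≥ 0 for every x ∈ [0,1], with equality at some a ∈ (0,1). Then G is continuous at a and G(a) = F(a); i.e., at a point of tangency between the integral distributions I_G and I_F, the underlying distribution functions must coincide. -/

import Mathlib

open MeasureTheory Set Filter Topology

/-- The cumulative distribution function `F(x) = ∫₀ˣ f`. -/
noncomputable def cdfF (f : ℝ → ℝ) (x : ℝ) : ℝ := ∫ t in (0:ℝ)..x, f t

/-- at a tangency point of the integral distributions, the two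
distribution functions coincide and the discrete one is continuous there. -/
theorem stmt_17 (f : ℝ → ℝ)
    (hf_cont : Continuous f) (hf_pos : ∀ t ∈ Icc (0:ℝ) 1, 0 < f t)
    (hf_prob : (∫ t in (0:ℝ)..1, f t) = 1)
    (μ : Measure ℝ) [IsProbabilityMeasure μ] (hsupp : μ ((Icc (0:ℝ) 1)ᶜ) = 0)
    (a : ℝ) (ha : a ∈ Ioo (0:ℝ) 1)
    (hineq : ∀ x ∈ Icc (0:ℝ) 1,
      0 ≤ ∫ t in (0:ℝ)..x, (cdfF f t - (μ (Iic t)).toReal))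
    (heq : (∫ t in (0:ℝ)..a, (cdfF f t - (μ (Iic t)).toReal)) = 0) :
    ContinuousAt (fun t => (μ (Iic t)).toReal) a ∧
      (μ (Iic a)).toReal = cdfF f a := by
  obtain ⟨ha0, ha1⟩ := ha
  set G : ℝ → ℝ := fun t => (μ (Iic t)).toReal with hGdef
  have hGfun : G = ⇑(ProbabilityTheory.cdf μ) :=
    funext fun t => (ProbabilityTheory.cdf_eq_real μ t).symm
  have hGmono : Monotone G := hGfun ▸ ProbabilityTheory.monotone_cdf μ
  have hFcont : Continuous (cdfF f) :=
    intervalIntegral.continuous_primitive (fun a b => hf_cont.intervalIntegrable a b) 0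
  have hFmono : ∀ x y : ℝ, 0 ≤ x → x ≤ y → y ≤ 1 → cdfF f x ≤ cdfF f y := by
    intro x y hx hxy hy1
    have h1 : cdfF f y - cdfF f x = ∫ t in x..y, f t := by
      rw [cdfF, cdfF, intervalIntegral.integral_interval_sub_left
        (hf_cont.intervalIntegrable 0 y) (hf_cont.intervalIntegrable 0 x)]
    have h2 : 0 ≤ ∫ t in x..y, f t :=
      intervalIntegral.integral_nonneg hxy
        (fun u hu => (hf_pos u ⟨le_trans hx hu.1, le_trans hu.2 hy1⟩).le)
    linarith
  have hint : ∀ x y : ℝ, IntervalIntegrable (fun t => cdfF f t - G t) volume x y :=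
    fun x y => (hFcont.intervalIntegrable x y).sub (hGmono.intervalIntegrable)
  -- Step 1 : G a ≤ F x for x ∈ (a, 1]
  have key1 : ∀ x ∈ Ioc a 1, G a ≤ cdfF f x := by
    intro x hx
    have hax : a ≤ x := hx.1.le
    have h0x : (0:ℝ) ≤ x := le_trans ha0.le hax
    have hadd := intervalIntegral.integral_add_adjacent_intervals (hint 0 a) (hint a x)
    have h0 : 0 ≤ ∫ t in a..x, (cdfF f t - G t) := by
      have h1 := hineq x ⟨h0x, hx.2⟩
      linarith [hadd, heq]
    have hsub : (∫ t in a..x, (cdfF f t - G t))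
        = (∫ t in a..x, cdfF f t) - ∫ t in a..x, G t :=
      intervalIntegral.integral_sub (hFcont.intervalIntegrable a x)
        (hGmono.intervalIntegrable)
    have hGlow : (x - a) * G a ≤ ∫ t in a..x, G t := by
      have := intervalIntegral.integral_mono_on hax (intervalIntegrable_const (μ := volume))
        (hGmono.intervalIntegrable) (fun t ht => hGmono ht.1)
      simpa [smul_eq_mul] using this
    have hFup : (∫ t in a..x, cdfF f t) ≤ (x - a) * cdfF f x := by
      have := intervalIntegral.integral_mono_on hax (hFcont.intervalIntegrable a x)
        (intervalIntegrable_const (μ := volume)) (fun t ht => hFmono t x (le_trans ha0.le ht.1) ht.2 hx.2)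
      simpa [smul_eq_mul] using this
    have hxa : 0 < x - a := by linarith [hx.1]
    have : (x - a) * G a ≤ (x - a) * cdfF f x := by linarith
    exact le_of_mul_le_mul_left (by linarith) hxa
  -- Step 2 : F x ≤ leftLim G a for x ∈ [0, a)
  have key2 : ∀ x ∈ Ico (0:ℝ) a, cdfF f x ≤ Function.leftLim G a := by
    intro x hx
    have hxa : x ≤ a := hx.2.le
    have hadd := intervalIntegral.integral_add_adjacent_intervals (hint 0 x) (hint x a)
    have h0 : (∫ t in x..a, (cdfF f t - G t)) ≤ 0 := by
      have h1 := hineq x ⟨hx.1, by linarith⟩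
      linarith [hadd, heq]
    have hsub : (∫ t in x..a, (cdfF f t - G t))
        = (∫ t in x..a, cdfF f t) - ∫ t in x..a, G t :=
      intervalIntegral.integral_sub (hFcont.intervalIntegrable x a)
        (hGmono.intervalIntegrable)
    have hGup : (∫ t in x..a, G t) ≤ (a - x) * Function.leftLim G a := by
      have hae : ∀ᵐ t ∂(volume.restrict (Icc x a)), G t ≤ Function.leftLim G a := by
        have h1 : ∀ᵐ t ∂(volume.restrict (Icc x a)), t ≠ a :=
          ae_restrict_of_ae (by
            rw [ae_iff]
            convert measure_singleton (μ := (volume : Measure ℝ)) a using 2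
            ext t
            simp)
        have h2 : ∀ᵐ t ∂(volume.restrict (Icc x a)), t ∈ Icc x a :=
          ae_restrict_mem measurableSet_Icc
        filter_upwards [h1, h2] with t ht1 ht2
        exact hGmono.le_leftLim (lt_of_le_of_ne ht2.2 ht1)
      have := intervalIntegral.integral_mono_ae_restrict hxa
        (hGmono.intervalIntegrable) (intervalIntegrable_const (μ := volume)) hae
      simpa [smul_eq_mul] using this
    have hFlow : (a - x) * cdfF f x ≤ ∫ t in x..a, cdfF f t := by
      have := intervalIntegral.integral_mono_on hxa (intervalIntegrable_const (μ := volume))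
        (hFcont.intervalIntegrable x a)
        (fun t ht => hFmono x t hx.1 ht.1 (by linarith [ht.2]))
      simpa [smul_eq_mul] using this
    have hax : 0 < a - x := by linarith [hx.2]
    have : (a - x) * cdfF f x ≤ (a - x) * Function.leftLim G a := by linarith
    exact le_of_mul_le_mul_left (by linarith) hax
  -- limits
  have hGa_le : G a ≤ cdfF f a := by
    refine ge_of_tendsto (hFcont.continuousAt.tendsto.mono_left nhdsWithin_le_nhds :
      Tendsto (cdfF f) (𝓝[>] a) (𝓝 (cdfF f a))) ?_
    filter_upwards [Ioo_mem_nhdsGT_of_mem ⟨le_refl a, ha1⟩] with x hx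
    exact key1 x ⟨hx.1, hx.2.le⟩
  have hF_le_L : cdfF f a ≤ Function.leftLim G a := by
    refine le_of_tendsto (hFcont.continuousAt.tendsto.mono_left nhdsWithin_le_nhds :
      Tendsto (cdfF f) (𝓝[<] a) (𝓝 (cdfF f a))) ?_
    filter_upwards [Ioo_mem_nhdsLT_of_mem ⟨ha0, le_refl a⟩] with x hx
    exact key2 x ⟨hx.1.le, hx.2⟩
  have hL_le : Function.leftLim G a ≤ G a := hGmono.leftLim_le le_rfl
  have hEq : G a = cdfF f a := le_antisymm hGa_le (le_trans hF_le_L hL_le)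
  refine ⟨?_, hEq⟩
  apply hGmono.continuousAt_iff_leftLim_eq_rightLim.2
  have hR : Function.rightLim G a = G a := by
    rw [hGfun]; exact (ProbabilityTheory.cdf μ).rightLim_eq a
  have hL : Function.leftLim G a = G a :=
    le_antisymm hL_le (hEq ▸ hF_le_L)
  rw [hR, hL]
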